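/- arXiv:2402.01754 — 2 statements merged into one kernel-verified Lean document; each statement's English description precedes it below -/
import Mathlib

section
/- Gronwall-type uniqueness consequence: if ψ ∈ C¹([a,b]) is increasing with ψ′ > 0, α > 0, C ≥ 0, u: [a,b] → ℝ is continuous and non-negative, and u(t) ≤ C ∫ₐᵗ (ψ(t)−ψ(s))^{α−1} u(s) ψ′(s) ds for all t ∈ [a,b], then u ≡ 0 on [a,b]. -/
open MeasureTheory Set

/-- Gronwall-type uniqueness consequence: if a continuous non-negative `u` satisfies
`u(t) ≤ C ∫ₐᵗ (ψ(t)−ψ(s))^{α−1} u(s) ψ'(s) ds`, then `u ≡ 0` on `[a,b]`. -/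
theorem gronwall_uniqueness_psi
    (a b : ℝ) (hab : a ≤ b) (α C : ℝ) (hα : 0 < α) (hC : 0 ≤ C)
    (ψ ψ' : ℝ → ℝ)
    (hψd : ∀ t ∈ Icc a b, HasDerivAt ψ (ψ' t) t)
    (hψ'c : ContinuousOn ψ' (Icc a b))
    (hψ'pos : ∀ t ∈ Icc a b, 0 < ψ' t)
    (hmono : StrictMonoOn ψ (Icc a b))
    (u : ℝ → ℝ) (huc : ContinuousOn u (Icc a b))
    (hunn : ∀ t ∈ Icc a b, 0 ≤ u t)
    (hineq : ∀ t ∈ Icc a b,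
      u t ≤ C * ∫ s in a..t, (ψ t - ψ s) ^ (α - 1) * u s * ψ' s) :
    ∀ t ∈ Icc a b, u t = 0 := by
  have hne : (Icc a b).Nonempty := nonempty_Icc.2 hab
  have hψc : ContinuousOn ψ (Icc a b) :=
    fun s hs => ((hψd s hs).continuousAt).continuousWithinAt
  have hψmono : MonotoneOn ψ (Icc a b) := hmono.monotoneOn
  obtain ⟨xB, hxBm, hxB⟩ := isCompact_Icc.exists_isMaxOn hne hψ'c
  obtain ⟨xm, hxmm, hxm⟩ := isCompact_Icc.exists_isMinOn hne hψ'c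
  set B := ψ' xB with hBdef
  set m := ψ' xm with hmdef
  have hBpos : 0 < B := hψ'pos xB hxBm
  have hmpos : 0 < m := hψ'pos xm hxmm
  have hB : ∀ s ∈ Icc a b, ψ' s ≤ B := fun s hs => hxB hs
  have hm : ∀ s ∈ Icc a b, m ≤ ψ' s := fun s hs => hxm hs
  have hψ'nn : ∀ s ∈ Icc a b, 0 ≤ ψ' s := fun s hs => (hψ'pos s hs).le
  set p := α - 1 with hpdef
  have hp : -1 < p := by rw [hpdef]; linarith
  -- Mean value theorem bounds
  have hMVT : ∀ x ∈ Icc a b, ∀ y ∈ Icc a b, x ≤ y →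
      m * (y - x) ≤ ψ y - ψ x ∧ ψ y - ψ x ≤ B * (y - x) := by
    intro x hx y hy hxy
    rcases eq_or_lt_of_le hxy with rfl | hlt
    · simp
    · have hIcc : Icc x y ⊆ Icc a b := Icc_subset_Icc hx.1 hy.2
      obtain ⟨ξ, hξ, hslope⟩ := exists_hasDerivAt_eq_slope ψ ψ' hlt (hψc.mono hIcc)
        (fun z hz => hψd z (hIcc (Ioo_subset_Icc_self hz)))
      have hξm : ξ ∈ Icc a b := hIcc (Ioo_subset_Icc_self hξ)
      have h1 : ψ y - ψ x = ψ' ξ * (y - x) := by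
        rw [hslope, div_mul_cancel₀ _ (sub_ne_zero.2 hlt.ne')]
      constructor <;> nlinarith [hm ξ hξm, hB ξ hξm, sub_pos.2 hlt]
  -- Integrability of the kernel times a continuous function
  have hInt : ∀ v : ℝ → ℝ, ContinuousOn v (Icc a b) → ∀ c t, a ≤ c → c ≤ t → t ≤ b →
      IntervalIntegrable (fun s => (ψ t - ψ s) ^ p * v s * ψ' s) volume c t := by
    intro v hv c t hac hct htb
    have hcmem : c ∈ Icc a b := ⟨hac, hct.trans htb⟩
    have htmem : t ∈ Icc a b := ⟨hac.trans hct, htb⟩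
    obtain ⟨xV, hxVm, hxV⟩ := isCompact_Icc.exists_isMaxOn hne hv.abs
    set V := |v xV| with hV
    have hVnn : 0 ≤ V := abs_nonneg _
    set K := max (B ^ p) (m ^ p) with hK
    have hKnn : 0 ≤ K := le_trans (Real.rpow_nonneg hBpos.le p) (le_max_left _ _)
    have hsub : Ioc c t ⊆ Icc a b :=
      Ioc_subset_Icc_self.trans (Icc_subset_Icc hac htb)
    -- dominating integrable function
    have hdom0 : IntervalIntegrable (fun s : ℝ => (t - s) ^ p) volume c t := by
      have h1 : IntervalIntegrable (fun x : ℝ => x ^ p) volume (t - c) (t - t) :=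
        intervalIntegral.intervalIntegrable_rpow' hp
      have h2 := h1.comp_sub_left t
      simpa using h2
    have hdom : IntervalIntegrable (fun s : ℝ => (t - s) ^ p * (K * V * B)) volume c t :=
      hdom0.mul_const _
    rw [intervalIntegrable_iff_integrableOn_Ioc_of_le hct] at hdom ⊢
    have hmes : AEStronglyMeasurable (fun s => (ψ t - ψ s) ^ p * v s * ψ' s)
        (volume.restrict (Ioc c t)) := by
      have h1 : AEMeasurable ψ (volume.restrict (Ioc c t)) :=
        (hψc.mono hsub).aemeasurable measurableSet_Ioc
      have h2 : AEMeasurable v (volume.restrict (Ioc c t)) :=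
        (hv.mono hsub).aemeasurable measurableSet_Ioc
      have h3 : AEMeasurable ψ' (volume.restrict (Ioc c t)) :=
        (hψ'c.mono hsub).aemeasurable measurableSet_Ioc
      exact ((((aemeasurable_const.sub h1).pow aemeasurable_const).mul h2).mul
        h3).aestronglyMeasurable
    refine hdom.mono' hmes ?_
    rw [ae_restrict_iff' measurableSet_Ioc]
    refine Filter.Eventually.of_forall fun s hs => ?_
    have hsmem : s ∈ Icc a b := hsub hs
    have hst : s ≤ t := hs.2
    have hψle : ψ s ≤ ψ t := hψmono hsmem htmem hst
    have hts : (0:ℝ) ≤ t - s := by linarith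
    have hker_nn : 0 ≤ (ψ t - ψ s) ^ p := Real.rpow_nonneg (by linarith) p
    have hKb : (ψ t - ψ s) ^ p ≤ K * (t - s) ^ p := by
      rcases le_or_gt 0 p with hp0 | hp0
      · calc (ψ t - ψ s) ^ p ≤ (B * (t - s)) ^ p :=
            Real.rpow_le_rpow (by linarith) (hMVT s hsmem t htmem hst).2 hp0
          _ = B ^ p * (t - s) ^ p := Real.mul_rpow hBpos.le hts
          _ ≤ K * (t - s) ^ p :=
            mul_le_mul_of_nonneg_right (le_max_left _ _) (Real.rpow_nonneg hts _)
      · rcases eq_or_lt_of_le hst with rfl | hlt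
        · simp [Real.zero_rpow (ne_of_lt hp0)]
        · have h0 : 0 < m * (t - s) := by
            have : 0 < t - s := by linarith
            positivity
          calc (ψ t - ψ s) ^ p ≤ (m * (t - s)) ^ p :=
              Real.rpow_le_rpow_of_nonpos h0 (hMVT s hsmem t htmem hst).1 hp0.le
            _ = m ^ p * (t - s) ^ p := Real.mul_rpow hmpos.le hts
            _ ≤ K * (t - s) ^ p :=
              mul_le_mul_of_nonneg_right (le_max_right _ _) (Real.rpow_nonneg hts _)
    have hnorm : ‖(ψ t - ψ s) ^ p * v s * ψ' s‖
        = (ψ t - ψ s) ^ p * |v s| * ψ' s := by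
      rw [Real.norm_eq_abs, abs_mul, abs_mul, abs_of_nonneg hker_nn,
        abs_of_nonneg (hψ'nn s hsmem)]
    rw [hnorm]
    have hvV : |v s| ≤ V := hxV hsmem
    calc (ψ t - ψ s) ^ p * |v s| * ψ' s
        ≤ (K * (t - s) ^ p) * V * B := by
          have h1 : (ψ t - ψ s) ^ p * |v s| ≤ (K * (t - s) ^ p) * V :=
            mul_le_mul hKb hvV (abs_nonneg _) (by positivity)
          exact mul_le_mul h1 (hB s hsmem) (hψ'nn s hsmem)
            (by positivity)
      _ = (t - s) ^ p * (K * V * B) := by ring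
  have hKint : ∀ c t, a ≤ c → c ≤ t → t ≤ b →
      IntervalIntegrable (fun s => (ψ t - ψ s) ^ p * ψ' s) volume c t := by
    intro c t hac hct htb
    have := hInt (fun _ => 1) continuousOn_const c t hac hct htb
    simpa using this
  -- value of the kernel integral
  have hKval : ∀ c t, a ≤ c → c ≤ t → t ≤ b →
      ∫ s in c..t, (ψ t - ψ s) ^ p * ψ' s = (ψ t - ψ c) ^ α / α := by
    intro c t hac hct htb
    have htmem : t ∈ Icc a b := ⟨hac.trans hct, htb⟩
    have hIcc : Icc c t ⊆ Icc a b := Icc_subset_Icc hac htb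
    set F : ℝ → ℝ := fun s => -((ψ t - ψ s) ^ α / α) with hF
    have hFc : ContinuousOn F (Icc c t) := by
      apply ContinuousOn.neg
      apply ContinuousOn.div_const
      exact (continuousOn_const.sub (hψc.mono hIcc)).rpow_const
        (fun s hs => Or.inr hα.le)
    have hFd : ∀ s ∈ Ioo c t, HasDerivAt F ((ψ t - ψ s) ^ p * ψ' s) s := by
      intro s hs
      have hsmem : s ∈ Icc a b := hIcc (Ioo_subset_Icc_self hs)
      have hlt : ψ s < ψ t := hmono hsmem htmem hs.2
      have h1 : HasDerivAt (fun s => ψ t - ψ s) (-ψ' s) s :=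
        (hψd s hsmem).const_sub (ψ t)
      have h2 := (h1.rpow_const (p := α) (Or.inl (by
        have : 0 < ψ t - ψ s := sub_pos.2 hlt
        positivity)))
      have h3 := (h2.div_const α).neg
      convert h3 using 1
      · rfl
      · rfl
      · rfl
      rw [hpdef]
      field_simp
    have hval := intervalIntegral.integral_eq_sub_of_hasDeriv_right_of_le hct hFc
      (fun s hs => (hFd s hs).hasDerivWithinAt) (hKint c t hac hct htb)
    rw [hval, hF]
    simp only [sub_self, Real.zero_rpow hα.ne']
    ring
  -- choice of the step size
  set ε := (α / (2 * C + 2)) ^ (α⁻¹) with hε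
  have hεpos : 0 < ε := Real.rpow_pos_of_pos (by positivity) _
  have hεα : C * ε ^ α / α ≤ 1 / 2 := by
    have h1 : ε ^ α = α / (2 * C + 2) := by
      rw [hε, ← Real.rpow_mul (by positivity), inv_mul_cancel₀ hα.ne', Real.rpow_one]
    rw [h1]
    have h2 : C * (α / (2 * C + 2)) / α = C / (2 * C + 2) := by
      field_simp
    rw [h2, div_le_div_iff₀ (by positivity) (by norm_num)]
    linarith
  set δ := ε / B with hδ
  have hδpos : 0 < δ := div_pos hεpos hBpos
  have hsmall : ∀ c ∈ Icc a b, ∀ t ∈ Icc a b, c ≤ t → t ≤ c + δ →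
      C * (ψ t - ψ c) ^ α / α ≤ 1 / 2 := by
    intro c hc t ht hct htδ
    have h2 : ψ t - ψ c ≤ ε := by
      calc ψ t - ψ c ≤ B * (t - c) := (hMVT c hc t ht hct).2
        _ ≤ B * δ := by nlinarith
        _ = ε := by rw [hδ]; field_simp
    have h3 : (ψ t - ψ c) ^ α ≤ ε ^ α :=
      Real.rpow_le_rpow (sub_nonneg.2 (hψmono hc ht hct)) h2 hα.le
    calc C * (ψ t - ψ c) ^ α / α ≤ C * ε ^ α / α := by gcongr
      _ ≤ 1 / 2 := hεα
  -- the bootstrap step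
  have hstep : ∀ c ∈ Icc a b, (∀ s ∈ Icc a c, u s = 0) →
      ∀ t ∈ Icc a (min (c + δ) b), u t = 0 := by
    intro c hc h0
    set d := min (c + δ) b with hd
    have had : a ≤ d := le_min (by linarith [hc.1, hδpos.le]) hab
    have hdb : d ≤ b := min_le_right _ _
    have hsubd : Icc a d ⊆ Icc a b := Icc_subset_Icc le_rfl hdb
    obtain ⟨t₁, ht₁m, ht₁⟩ := isCompact_Icc.exists_isMaxOn (nonempty_Icc.2 had)
      (huc.mono hsubd)
    set M := u t₁ with hM
    have hMnn : 0 ≤ M := hunn _ (hsubd ht₁m)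
    suffices hM0 : M = 0 by
      intro t htm
      have h1 : u t ≤ M := ht₁ htm
      have h2 := hunn t (hsubd htm)
      linarith [hM0 ▸ h1]
    by_cases htc : t₁ ≤ c
    · exact h0 t₁ ⟨ht₁m.1, htc⟩
    push_neg at htc
    have ht₁b : t₁ ∈ Icc a b := hsubd ht₁m
    have hat₁ : a ≤ t₁ := ht₁m.1
    have hct₁ : c ≤ t₁ := htc.le
    set f : ℝ → ℝ := fun s => (ψ t₁ - ψ s) ^ p * u s * ψ' s with hf
    set g : ℝ → ℝ := fun s => if s ≤ c then 0 else (ψ t₁ - ψ s) ^ p * M * ψ' s with hg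
    have hfint : IntervalIntegrable f volume a t₁ := hInt u huc a t₁ le_rfl hat₁ ht₁b.2
    have hgint1 : IntervalIntegrable g volume a c := by
      rw [intervalIntegrable_iff_integrableOn_Ioc_of_le hc.1]
      refine (integrable_zero _ _ _).congr ?_
      rw [Filter.EventuallyEq, ae_restrict_iff' measurableSet_Ioc]
      exact Filter.Eventually.of_forall fun s hs => by simp [hg, hs.2]
    have hgint2 : IntervalIntegrable g volume c t₁ := by
      have base := hInt (fun _ => M) continuousOn_const c t₁ hc.1 hct₁ ht₁b.2
      rw [intervalIntegrable_iff_integrableOn_Ioc_of_le hct₁] at base ⊢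
      refine base.congr ?_
      rw [Filter.EventuallyEq, ae_restrict_iff' measurableSet_Ioc]
      exact Filter.Eventually.of_forall fun s hs => by
        simp [hg, not_le.2 hs.1]
    have hgint : IntervalIntegrable g volume a t₁ := hgint1.trans hgint2
    have hfg : ∀ s ∈ Icc a t₁, f s ≤ g s := by
      intro s hs
      have hsab : s ∈ Icc a b := ⟨hs.1, hs.2.trans ht₁b.2⟩
      by_cases hsc : s ≤ c
      · simp [hf, hg, hsc, h0 s ⟨hs.1, hsc⟩]
      · simp only [hg, if_neg hsc]
        have h1 : u s ≤ M := ht₁ ⟨hs.1, hs.2.trans ht₁m.2⟩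
        have hknn : 0 ≤ (ψ t₁ - ψ s) ^ p :=
          Real.rpow_nonneg (sub_nonneg.2 (hψmono hsab ht₁b hs.2)) _
        exact mul_le_mul_of_nonneg_right
          (mul_le_mul_of_nonneg_left h1 hknn) (hψ'nn s hsab)
    have hIle : (∫ s in a..t₁, f s) ≤ ∫ s in a..t₁, g s :=
      intervalIntegral.integral_mono_on hat₁ hfint hgint hfg
    have hgval : (∫ s in a..t₁, g s) = M * ((ψ t₁ - ψ c) ^ α / α) := by
      rw [← intervalIntegral.integral_add_adjacent_intervals hgint1 hgint2]
      have h1 : (∫ s in a..c, g s) = 0 := by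
        rw [intervalIntegral.integral_congr (g := fun _ => 0)]
        · simp
        · intro s hs
          rw [uIcc_of_le hc.1] at hs
          simp [hg, hs.2]
      have h2 : (∫ s in c..t₁, g s) = M * ((ψ t₁ - ψ c) ^ α / α) := by
        have heq : (∫ s in c..t₁, g s)
            = ∫ s in c..t₁, M * ((ψ t₁ - ψ s) ^ p * ψ' s) := by
          apply intervalIntegral.integral_congr_ae
          refine Filter.Eventually.of_forall fun s hsI => ?_
          rw [uIoc_of_le hct₁] at hsI
          simp [hg, not_le.2 hsI.1]; ring
        rw [heq, intervalIntegral.integral_const_mul, hKval c t₁ hc.1 hct₁ ht₁b.2]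
      rw [h1, h2, zero_add]
    have hmain := hineq t₁ ht₁b
    have hml : M ≤ C * (M * ((ψ t₁ - ψ c) ^ α / α)) := by
      calc M = u t₁ := rfl
        _ ≤ C * ∫ s in a..t₁, f s := hmain
        _ ≤ C * ∫ s in a..t₁, g s := mul_le_mul_of_nonneg_left hIle hC
        _ = C * (M * ((ψ t₁ - ψ c) ^ α / α)) := by rw [hgval]
    have hhalf : C * (ψ t₁ - ψ c) ^ α / α ≤ 1 / 2 :=
      hsmall c hc t₁ ht₁b hct₁ (le_trans ht₁m.2 (min_le_left _ _))
    have heq2 : C * (M * ((ψ t₁ - ψ c) ^ α / α)) = M * (C * (ψ t₁ - ψ c) ^ α / α) := by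
      ring
    rw [heq2] at hml
    have := mul_le_mul_of_nonneg_left hhalf hMnn
    nlinarith
  -- iterate the step
  have hzero : ∀ n : ℕ, ∀ t ∈ Icc a (min (a + n * δ) b), u t = 0 := by
    intro n
    induction n with
    | zero =>
      intro t ht
      simp only [Nat.cast_zero, zero_mul, add_zero, min_eq_left hab] at ht
      have hta : t = a := le_antisymm ht.2 ht.1
      subst hta
      have h1 := hineq t (left_mem_Icc.2 hab)
      rw [intervalIntegral.integral_same, mul_zero] at h1
      exact le_antisymm h1 (hunn t (left_mem_Icc.2 hab))
    | succ n ih =>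
      intro t ht
      set c := min (a + n * δ) b with hcdef
      have hc : c ∈ Icc a b :=
        ⟨le_min (le_add_of_nonneg_right (by positivity)) hab, min_le_right _ _⟩
      refine hstep c hc (fun s hs => ih s hs) t ⟨ht.1, le_trans ht.2 ?_⟩
      have hle : min (a + (n + 1 : ℕ) * δ) b ≤ c + δ := by
        rcases le_total (a + n * δ) b with h | h
        · rw [hcdef, min_eq_left h]
          calc min (a + (n + 1 : ℕ) * δ) b ≤ a + (n + 1 : ℕ) * δ := min_le_left _ _
            _ = a + n * δ + δ := by push_cast; ring
        · rw [hcdef, min_eq_right h]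
          calc min (a + (n + 1 : ℕ) * δ) b ≤ b := min_le_right _ _
            _ ≤ b + δ := by linarith
      exact le_min hle (min_le_right _ _)
  intro t ht
  obtain ⟨n, hn⟩ := exists_nat_ge ((b - a) / δ)
  have hba : b ≤ a + n * δ := by
    rw [div_le_iff₀ hδpos] at hn
    linarith
  exact hzero n t (by rw [min_eq_right hba]; exact ht)
end

section
/- Banach fixed-point argument for existence/uniqueness: let X be a Banach space, K ≥ 1, q ∈ (1/2,1], ψ ∈ C¹([0,T]) strictly increasing, f : [0,T] × X → X continuous with ‖f(t,x) − f(t,y)‖ ≤ N₀‖x−y‖, and suppose K N₀ (ψ(T)−ψ(0))^{2q} / Γ(2q+1) < 1. Then the map Ψ on C([0,T];X) defined by (ΨΘ)(t) = C_q^ψ(t,0)Θ₀ + R_q^ψ(t,0)Θ₁ + ∫₀ᵗ (ψ(t)−ψ(s))^{q−1} P_q^ψ(t,s) f(s,Θ(s)) ψ′(s) ds has a unique fixed point in C([0,T];X), where the operator families satisfy ‖P_q^ψ(t,s)‖ ≤ K(ψ(t)−ψ(s))^q/Γ(2q). -/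
set_option maxHeartbeats 1000000

open MeasureTheory Set

/-- Joint continuity of a strongly continuous family of operators, via Banach–Steinhaus. -/
lemma joint_cont_aux {X : Type*} [NormedAddCommGroup X] [NormedSpace ℝ X] [CompleteSpace X]
    (P : ℝ × ℝ → X →L[ℝ] X) (h : ∀ x : X, Continuous fun p => P p x) :
    Continuous fun z : (ℝ × ℝ) × X => P z.1 z.2 := by
  rw [continuous_iff_continuousAt]
  rintro ⟨p₀, x₀⟩
  obtain ⟨C, hC⟩ : ∃ C, ∀ p : Metric.closedBall p₀ 1, ‖P p‖ ≤ C := by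
    apply banach_steinhaus
    intro x
    obtain ⟨C, hC⟩ := (isCompact_closedBall p₀ 1).exists_bound_of_continuousOn
      ((h x).norm.continuousOn)
    exact ⟨C, fun p => by simpa using hC p p.2⟩
  have key : (fun z : (ℝ × ℝ) × X => P z.1 z.2) =
      fun z => P z.1 (z.2 - x₀) + P z.1 x₀ := by
    funext z; rw [map_sub]; abel
  rw [key]
  have h2 : ContinuousAt (fun z : (ℝ × ℝ) × X => P z.1 x₀) (p₀, x₀) :=
    ((h x₀).comp continuous_fst).continuousAt
  have h1 : Filter.Tendsto (fun z : (ℝ × ℝ) × X => P z.1 (z.2 - x₀)) (nhds (p₀, x₀))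
      (nhds 0) := by
    apply squeeze_zero_norm' (a := fun z : (ℝ × ℝ) × X => C * ‖z.2 - x₀‖)
    · have hball : ∀ᶠ z : (ℝ × ℝ) × X in nhds (p₀, x₀), z.1 ∈ Metric.closedBall p₀ 1 := by
        have : Metric.closedBall p₀ 1 ∈ nhds p₀ := Metric.closedBall_mem_nhds _ one_pos
        exact continuous_fst.continuousAt.preimage_mem_nhds this
      filter_upwards [hball] with z hz
      calc ‖P z.1 (z.2 - x₀)‖ ≤ ‖P z.1‖ * ‖z.2 - x₀‖ := (P z.1).le_opNorm _
        _ ≤ C * ‖z.2 - x₀‖ := by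
            exact mul_le_mul_of_nonneg_right (hC ⟨z.1, hz⟩) (norm_nonneg _)
    · have : Filter.Tendsto (fun z : (ℝ × ℝ) × X => C * ‖z.2 - x₀‖) (nhds (p₀, x₀))
          (nhds (C * ‖x₀ - x₀‖)) :=
        (continuous_const.mul ((continuous_snd.sub continuous_const).norm)).continuousAt
      simpa using this
  have h1' : ContinuousAt (fun z : (ℝ × ℝ) × X => P z.1 (z.2 - x₀)) (p₀, x₀) := by
    unfold ContinuousAt
    simpa using h1
  exact h1'.add h2

/-- FTC computation of the fractional kernel integral. -/
lemma ftc_kernel_aux (T t r : ℝ) (ψ ψ' : ℝ → ℝ)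
    (hψd : ∀ s ∈ Icc 0 T, HasDerivAt ψ (ψ' s) s)
    (hψ'c : ContinuousOn ψ' (Icc 0 T))
    (hr : 1 ≤ r) (ht : t ∈ Icc 0 T) :
    ∫ s in (0:ℝ)..t, (ψ t - ψ s) ^ (r - 1) * ψ' s = (ψ t - ψ 0) ^ r / r := by
  have hr0 : r ≠ 0 := by linarith
  have hsub : Icc (0:ℝ) t ⊆ Icc 0 T := Icc_subset_Icc le_rfl ht.2
  have hψc : ContinuousOn ψ (Icc 0 T) := fun s hs => (hψd s hs).continuousAt.continuousWithinAt
  have hderiv : ∀ s ∈ uIcc (0:ℝ) t,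
      HasDerivAt (fun s => -(ψ t - ψ s) ^ r / r) ((ψ t - ψ s) ^ (r - 1) * ψ' s) s := by
    intro s hs
    rw [uIcc_of_le ht.1] at hs
    have hs' : s ∈ Icc 0 T := hsub hs
    have h1 : HasDerivAt (fun s => ψ t - ψ s) (-ψ' s) s := by
      simpa using (hψd s hs').const_sub (ψ t)
    have h2 : HasDerivAt (fun x : ℝ => x ^ r) (r * (ψ t - ψ s) ^ (r - 1)) (ψ t - ψ s) :=
      Real.hasDerivAt_rpow_const (Or.inr hr)
    have h3 := h2.comp s h1
    have h4 := (h3.neg).div_const r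
    exact h4.congr_deriv (by rw [div_eq_iff hr0]; ring)
  have hint : IntervalIntegrable (fun s => (ψ t - ψ s) ^ (r - 1) * ψ' s) volume 0 t := by
    apply ContinuousOn.intervalIntegrable
    rw [uIcc_of_le ht.1]
    apply ContinuousOn.mul _ (hψ'c.mono hsub)
    apply ContinuousOn.rpow_const (continuousOn_const.sub (hψc.mono hsub))
    intro s hs
    right; linarith
  rw [intervalIntegral.integral_eq_sub_of_hasDerivAt hderiv hint, sub_self,
    Real.zero_rpow hr0]
  ring

/-- Existence and uniqueness of a fixed point (mild solution) for the fractional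
evolution system via the Banach fixed-point theorem. -/
theorem mild_solution_exists_unique
    {X : Type*} [NormedAddCommGroup X] [NormedSpace ℝ X] [CompleteSpace X]
    (T K q N₀ : ℝ) (hT : 0 < T) (hK : 1 ≤ K) (hq : q ∈ Ioc (1/2 : ℝ) 1) (hN : 0 < N₀)
    (ψ ψ' : ℝ → ℝ)
    (hψd : ∀ t ∈ Icc 0 T, HasDerivAt ψ (ψ' t) t)
    (hψ'c : ContinuousOn ψ' (Icc 0 T))
    (hψ'pos : ∀ t ∈ Icc 0 T, 0 < ψ' t)
    (hmono : StrictMonoOn ψ (Icc 0 T))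
    (f : ℝ → X → X)
    (hfc : Continuous fun p : ℝ × X => f p.1 p.2)
    (hlip : ∀ t : ℝ, ∀ x y : X, ‖f t x - f t y‖ ≤ N₀ * ‖x - y‖)
    (Cq Rq : ℝ → X →L[ℝ] X) (P : ℝ → ℝ → X →L[ℝ] X)
    (hCqc : ∀ x : X, ContinuousOn (fun t => Cq t x) (Icc 0 T))
    (hRqc : ∀ x : X, ContinuousOn (fun t => Rq t x) (Icc 0 T))
    (hPc : ∀ x : X, Continuous fun p : ℝ × ℝ => P p.1 p.2 x)
    (hCqb : ∀ t ∈ Icc 0 T, ‖Cq t‖ ≤ K)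
    (hRqb : ∀ t ∈ Icc 0 T, ‖Rq t‖ ≤ K * (ψ t - ψ 0) / ψ' 0)
    (hPb : ∀ s t : ℝ, 0 ≤ s → s ≤ t → t ≤ T →
      ‖P t s‖ ≤ K * (ψ t - ψ s) ^ q / Real.Gamma (2 * q))
    (hsmall : K * N₀ * (ψ T - ψ 0) ^ (2 * q) / Real.Gamma (2 * q + 1) < 1)
    (Θ₀ Θ₁ : X) :
    ∃ Θ : ℝ → X,
      (ContinuousOn Θ (Icc 0 T) ∧ ∀ t ∈ Icc 0 T,
        Θ t = Cq t Θ₀ + Rq t Θ₁ +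
          ∫ s in (0:ℝ)..t, ((ψ t - ψ s) ^ (q - 1) * ψ' s) • P t s (f s (Θ s))) ∧
      ∀ Φ : ℝ → X,
        (ContinuousOn Φ (Icc 0 T) ∧ ∀ t ∈ Icc 0 T,
          Φ t = Cq t Θ₀ + Rq t Θ₁ +
            ∫ s in (0:ℝ)..t, ((ψ t - ψ s) ^ (q - 1) * ψ' s) • P t s (f s (Φ s))) →
        ∀ t ∈ Icc 0 T, Φ t = Θ t := by
  obtain ⟨hq1, hq2⟩ := hq
  have hK0 : (0:ℝ) < K := lt_of_lt_of_le one_pos hK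
  have hr1 : (1:ℝ) < 2 * q := by linarith
  have hΓpos : 0 < Real.Gamma (2 * q) := Real.Gamma_pos_of_pos (by linarith)
  have hΓ1pos : 0 < Real.Gamma (2 * q + 1) := Real.Gamma_pos_of_pos (by linarith)
  have hΓadd : Real.Gamma (2 * q + 1) = (2 * q) * Real.Gamma (2 * q) := by
    rw [Real.Gamma_add_one (by linarith : (2:ℝ) * q ≠ 0)]
  have hψc : ContinuousOn ψ (Icc 0 T) := fun s hs => (hψd s hs).continuousAt.continuousWithinAt
  have hmonoOn : MonotoneOn ψ (Icc 0 T) := hmono.monotoneOn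
  have h0mem : (0:ℝ) ∈ Icc 0 T := ⟨le_rfl, hT.le⟩
  have hTmem : T ∈ Icc (0:ℝ) T := ⟨hT.le, le_rfl⟩
  -- clamping to [0, T]
  set pr : ℝ → ℝ := fun a => (Set.projIcc 0 T hT.le a : ℝ) with hpr_def
  have hprmem : ∀ a, pr a ∈ Icc 0 T := fun a => (Set.projIcc 0 T hT.le a).2
  have hprc : Continuous pr := continuous_subtype_val.comp continuous_projIcc
  have hpr_eq : ∀ a ∈ Icc 0 T, pr a = a := fun a ha => by
    simp [hpr_def, Set.projIcc_of_mem hT.le ha]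
  set σ : ℝ × ℝ → ℝ := fun p => min (pr p.2) (pr p.1) with hσ_def
  have hσc : Continuous σ := (hprc.comp continuous_snd).min (hprc.comp continuous_fst)
  have hσmem : ∀ p, σ p ∈ Icc 0 T :=
    fun p => ⟨le_min (hprmem _).1 (hprmem _).1, min_le_of_left_le (hprmem _).2⟩
  have hσle : ∀ p, σ p ≤ pr p.1 := fun p => min_le_right _ _
  set D : ℝ × ℝ → ℝ := fun p => ψ (pr p.1) - ψ (σ p) with hD_def
  have hD0 : ∀ p, 0 ≤ D p := fun p =>
    sub_nonneg.2 (hmonoOn (hσmem p) (hprmem p.1) (hσle p))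
  have hDc : Continuous D := by
    have h1 : Continuous fun p : ℝ × ℝ => ψ (pr p.1) :=
      hψc.comp_continuous (hprc.comp continuous_fst) (fun p => hprmem p.1)
    have h2 : Continuous fun p : ℝ × ℝ => ψ (σ p) :=
      hψc.comp_continuous hσc hσmem
    exact h1.sub h2
  have hψ'prc : Continuous fun p : ℝ × ℝ => ψ' (pr p.2) :=
    hψ'c.comp_continuous (hprc.comp continuous_snd) (fun p => hprmem p.2)
  -- clamped operator family
  set Pm : ℝ × ℝ → X →L[ℝ] X := fun p => P (pr p.1) (σ p) with hPm_def
  have hPmb : ∀ p, ‖Pm p‖ ≤ K * D p ^ q / Real.Gamma (2 * q) := fun p =>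
    hPb (σ p) (pr p.1) (hσmem p).1 (hσle p) (hprmem p.1).2
  have hjoint : Continuous fun z : (ℝ × ℝ) × X => Pm z.1 z.2 := by
    apply joint_cont_aux
    intro x
    exact (hPc x).comp ((hprc.comp continuous_fst).prodMk hσc)
  -- the integrand
  set G : C(Icc (0:ℝ) T, X) → ℝ × ℝ → X := fun u p =>
    (D p ^ (q - 1) * ψ' (pr p.2)) • Pm p (f p.2 (u (Set.projIcc 0 T hT.le p.2))) with hG_def
  have hgc : ∀ u : C(Icc (0:ℝ) T, X),
      Continuous fun s : ℝ => f s (u (Set.projIcc 0 T hT.le s)) := fun u =>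
    hfc.comp (continuous_id.prodMk (u.continuous.comp continuous_projIcc))
  -- fundamental norm bound
  have hGb : ∀ (h : ℝ → X) (p : ℝ × ℝ),
      ‖(D p ^ (q - 1) * ψ' (pr p.2)) • Pm p (h p.2)‖ ≤
        K / Real.Gamma (2 * q) * D p ^ (2 * q - 1) * (ψ' (pr p.2) * ‖h p.2‖) := by
    intro h p
    have hψ'0 : 0 ≤ ψ' (pr p.2) := (hψ'pos _ (hprmem _)).le
    have hsc0 : 0 ≤ D p ^ (q - 1) * ψ' (pr p.2) :=
      mul_nonneg (Real.rpow_nonneg (hD0 p) _) hψ'0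
    rw [norm_smul, Real.norm_eq_abs, abs_of_nonneg hsc0]
    have h1 : ‖Pm p (h p.2)‖ ≤ K * D p ^ q / Real.Gamma (2 * q) * ‖h p.2‖ :=
      le_trans ((Pm p).le_opNorm _) (mul_le_mul_of_nonneg_right (hPmb p) (norm_nonneg _))
    have hDq : D p ^ (q - 1) * D p ^ q = D p ^ (2 * q - 1) := by
      rw [← Real.rpow_add' (hD0 p) (by intro hc; linarith)]
      congr 1
      ring
    calc D p ^ (q - 1) * ψ' (pr p.2) * ‖Pm p (h p.2)‖
        ≤ D p ^ (q - 1) * ψ' (pr p.2) * (K * D p ^ q / Real.Gamma (2 * q) * ‖h p.2‖) :=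
          mul_le_mul_of_nonneg_left h1 hsc0
      _ = K / Real.Gamma (2 * q) * (D p ^ (q - 1) * D p ^ q) * (ψ' (pr p.2) * ‖h p.2‖) := by
          ring
      _ = K / Real.Gamma (2 * q) * D p ^ (2 * q - 1) * (ψ' (pr p.2) * ‖h p.2‖) := by
          rw [hDq]
  -- continuity of the integrand
  have hGcont : ∀ u : C(Icc (0:ℝ) T, X), Continuous (G u) := by
    intro u
    have hBc : Continuous fun p : ℝ × ℝ =>
        K / Real.Gamma (2 * q) * D p ^ (2 * q - 1) *
          (ψ' (pr p.2) * ‖f p.2 (u (Set.projIcc 0 T hT.le p.2))‖) := by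
      apply Continuous.mul
      · exact continuous_const.mul (hDc.rpow_const (fun p => Or.inr (by linarith)))
      · exact hψ'prc.mul (((hgc u).comp continuous_snd).norm)
    rw [continuous_iff_continuousAt]
    intro p₀
    by_cases hD : D p₀ = 0
    · have hval : G u p₀ = 0 := by
        have hb := hGb (fun s => f s (u (Set.projIcc 0 T hT.le s))) p₀
        rw [hD, Real.zero_rpow (by intro hc; linarith : (2:ℝ) * q - 1 ≠ 0)] at hb
        simp only [mul_zero, zero_mul] at hb
        simp only [hG_def]
        rw [hD]
        exact norm_le_zero_iff.mp hb
      have htend : Filter.Tendsto (G u) (nhds p₀) (nhds 0) := by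
        apply squeeze_zero_norm (fun p => hGb (fun s => f s (u (Set.projIcc 0 T hT.le s))) p)
        have := hBc.continuousAt (x := p₀)
        rw [ContinuousAt, hD, Real.zero_rpow (by intro hc; linarith : (2:ℝ) * q - 1 ≠ 0)] at this
        simpa using this
      rw [ContinuousAt, hval]
      exact htend
    · have h1 : ContinuousAt (fun p => D p ^ (q - 1)) p₀ :=
        hDc.continuousAt.rpow_const (Or.inl hD)
      have h2 : ContinuousAt (fun p : ℝ × ℝ => Pm p (f p.2 (u (Set.projIcc 0 T hT.le p.2)))) p₀ := by
        have : Continuous fun p : ℝ × ℝ => Pm p (f p.2 (u (Set.projIcc 0 T hT.le p.2))) :=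
          hjoint.comp (continuous_id.prodMk ((hgc u).comp continuous_snd))
        exact this.continuousAt
      exact ((h1.mul hψ'prc.continuousAt).smul h2)
  have hGint : ∀ (u : C(Icc (0:ℝ) T, X)) (a b : ℝ),
      IntervalIntegrable (fun s => G u (a, s)) volume 0 b := fun u a b =>
    ((hGcont u).comp (continuous_const.prodMk continuous_id)).intervalIntegrable 0 b
  -- continuity of the primitive
  have hIc : ∀ u : C(Icc (0:ℝ) T, X),
      Continuous fun a : ℝ => ∫ s in (0:ℝ)..a, G u (a, s) := by
    intro u
    have h1 : Continuous (Function.uncurry fun a s => G u (a, s)) := hGcont u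
    have h2 := intervalIntegral.continuous_parametric_primitive_of_continuous
      (μ := volume) (a₀ := (0:ℝ)) h1
    have hd : Continuous fun a : ℝ => ((a, a) : ℝ × ℝ) :=
      continuous_id.prodMk continuous_id
    simpa only [Function.comp_def] using h2.comp hd
  -- the Picard map
  set Ψ : C(Icc (0:ℝ) T, X) → C(Icc (0:ℝ) T, X) := fun u =>
    ⟨fun t => Cq t Θ₀ + Rq t Θ₁ + ∫ s in (0:ℝ)..(t:ℝ), G u ((t:ℝ), s), by
      apply Continuous.add
      apply Continuous.add
      · exact (hCqc Θ₀).comp_continuous continuous_subtype_val (fun t => t.2)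
      · exact (hRqc Θ₁).comp_continuous continuous_subtype_val (fun t => t.2)
      · exact (hIc u).comp continuous_subtype_val⟩ with hΨ_def
  -- contraction estimate
  have hψT0 : ψ 0 ≤ ψ T := hmonoOn h0mem hTmem hT.le
  set k : ℝ := K * N₀ * (ψ T - ψ 0) ^ (2 * q) / Real.Gamma (2 * q + 1) with hk_def
  have hk0 : 0 ≤ k :=
    div_nonneg (mul_nonneg (mul_nonneg hK0.le hN.le)
      (Real.rpow_nonneg (by linarith) _)) hΓ1pos.le
  have hcontr : ∀ u v : C(Icc (0:ℝ) T, X), dist (Ψ u) (Ψ v) ≤ k * dist u v := by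
    intro u v
    rw [ContinuousMap.dist_le (mul_nonneg hk0 dist_nonneg)]
    intro t
    have ht : (t : ℝ) ∈ Icc 0 T := t.2
    rw [dist_eq_norm]
    have hsub : Ψ u t - Ψ v t =
        ∫ s in (0:ℝ)..(t:ℝ), (G u ((t:ℝ), s) - G v ((t:ℝ), s)) := by
      simp only [hΨ_def, ContinuousMap.coe_mk]
      rw [intervalIntegral.integral_sub (hGint u t t) (hGint v t t)]
      abel
    rw [hsub]
    set c : ℝ := K * N₀ / Real.Gamma (2 * q) * dist u v with hc_def
    have hc0 : 0 ≤ c :=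
      mul_nonneg (div_nonneg (mul_nonneg hK0.le hN.le) hΓpos.le) dist_nonneg
    have hbd : ∀ s ∈ Set.uIoc (0:ℝ) (t:ℝ), ‖G u ((t:ℝ), s) - G v ((t:ℝ), s)‖ ≤
        c * ((ψ t - ψ s) ^ (2 * q - 1) * ψ' s) := by
      intro s hs
      rw [uIoc_of_le ht.1] at hs
      have hst : s ≤ (t:ℝ) := hs.2
      have hsT : s ∈ Icc 0 T := ⟨hs.1.le, hst.trans ht.2⟩
      have hprt : pr t = t := hpr_eq t ht
      have hprs : pr s = s := hpr_eq s hsT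
      have hσts : σ ((t:ℝ), s) = s := by
        simp only [hσ_def]
        rw [hprs, hprt]
        exact min_eq_left hst
      have hDts : D ((t:ℝ), s) = ψ t - ψ s := by
        simp only [hD_def]
        rw [hprt, hσts]
      have hdiff : G u ((t:ℝ), s) - G v ((t:ℝ), s) =
          (D ((t:ℝ), s) ^ (q - 1) * ψ' (pr ((t:ℝ), s).2)) •
            Pm ((t:ℝ), s) ((fun a => f a (u (Set.projIcc 0 T hT.le a)) -
              f a (v (Set.projIcc 0 T hT.le a))) ((t:ℝ), s).2) := by
        simp only [hG_def, smul_sub, map_sub]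
      rw [hdiff]
      refine le_trans (hGb (fun a => f a (u (Set.projIcc 0 T hT.le a)) -
        f a (v (Set.projIcc 0 T hT.le a))) ((t:ℝ), s)) ?_
      have hfuv : ‖f s (u (Set.projIcc 0 T hT.le s)) - f s (v (Set.projIcc 0 T hT.le s))‖ ≤
          N₀ * dist u v := by
        refine le_trans (hlip s _ _) ?_
        apply mul_le_mul_of_nonneg_left _ hN.le
        rw [← dist_eq_norm]
        exact ContinuousMap.dist_apply_le_dist _
      have hψ's0 : 0 ≤ ψ' s := (hψ'pos s hsT).le
      calc K / Real.Gamma (2 * q) * D ((t:ℝ), s) ^ (2 * q - 1) *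
            (ψ' (pr ((t:ℝ), s).2) * ‖(fun a => f a (u (Set.projIcc 0 T hT.le a)) -
              f a (v (Set.projIcc 0 T hT.le a))) ((t:ℝ), s).2‖)
          ≤ K / Real.Gamma (2 * q) * D ((t:ℝ), s) ^ (2 * q - 1) *
            (ψ' s * (N₀ * dist u v)) := by
            simp only [hprs]
            apply mul_le_mul_of_nonneg_left _
              (mul_nonneg (div_nonneg hK0.le hΓpos.le) (Real.rpow_nonneg (hD0 _) _))
            exact mul_le_mul_of_nonneg_left hfuv hψ's0
        _ = c * ((ψ t - ψ s) ^ (2 * q - 1) * ψ' s) := by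
            rw [hDts, hc_def]
            ring
    have hgint : IntervalIntegrable (fun s => c * ((ψ t - ψ s) ^ (2 * q - 1) * ψ' s))
        volume 0 t := by
      apply ContinuousOn.intervalIntegrable
      rw [uIcc_of_le ht.1]
      have hsub2 : Icc (0:ℝ) (t:ℝ) ⊆ Icc 0 T := Icc_subset_Icc le_rfl ht.2
      apply ContinuousOn.mul continuousOn_const
      apply ContinuousOn.mul _ (hψ'c.mono hsub2)
      apply ContinuousOn.rpow_const (continuousOn_const.sub (hψc.mono hsub2))
      intro s hs
      right; linarith
    refine le_trans (intervalIntegral.norm_integral_le_abs_of_norm_le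
      (Filter.eventually_of_mem (self_mem_ae_restrict measurableSet_uIoc) hbd) hgint) ?_
    have hψ0t : ψ 0 ≤ ψ (t:ℝ) := hmonoOn h0mem ht ht.1
    have hftc := ftc_kernel_aux T t (2*q) ψ ψ' hψd hψ'c hr1.le ht
    rw [intervalIntegral.integral_const_mul, hftc]
    have habs : |c * ((ψ (t:ℝ) - ψ 0) ^ (2*q) / (2*q))| =
        c * ((ψ (t:ℝ) - ψ 0) ^ (2*q) / (2*q)) := by
      apply abs_of_nonneg
      exact mul_nonneg hc0 (div_nonneg (Real.rpow_nonneg (by linarith) _) (by linarith))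
    rw [habs]
    have h1 : (ψ (t:ℝ) - ψ 0) ^ (2*q) ≤ (ψ T - ψ 0) ^ (2*q) := by
      apply Real.rpow_le_rpow (by linarith) _ (by linarith)
      have := hmonoOn ht hTmem ht.2
      linarith
    calc c * ((ψ (t:ℝ) - ψ 0) ^ (2*q) / (2*q))
        ≤ c * ((ψ T - ψ 0) ^ (2*q) / (2*q)) := by gcongr
      _ = k * dist u v := by
          rw [hk_def, hc_def, hΓadd]
          field_simp
  -- Banach fixed point
  have hne : Nonempty C(Icc (0:ℝ) T, X) := ⟨ContinuousMap.const _ 0⟩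
  have hlips : LipschitzWith (Real.toNNReal k) Ψ := by
    apply LipschitzWith.of_dist_le_mul
    intro u v
    rw [Real.coe_toNNReal k hk0]
    exact hcontr u v
  have hCW : ContractingWith (Real.toNNReal k) Ψ := by
    constructor
    · rw [← Real.toNNReal_one]
      exact (Real.toNNReal_lt_toNNReal_iff one_pos).2 hsmall
    · exact hlips
  set w : C(Icc (0:ℝ) T, X) := ContractingWith.fixedPoint Ψ hCW with hw_def
  have hwfix : Ψ w = w := hCW.fixedPoint_isFixedPt
  -- matching the clamped integrand with the original one
  have hmatch : ∀ (u : C(Icc (0:ℝ) T, X)) (Φ : ℝ → X),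
      (∀ s ∈ Icc (0:ℝ) T, u (Set.projIcc 0 T hT.le s) = Φ s) →
      ∀ t ∈ Icc (0:ℝ) T, (∫ s in (0:ℝ)..t, G u (t, s)) =
        ∫ s in (0:ℝ)..t, ((ψ t - ψ s) ^ (q - 1) * ψ' s) • P t s (f s (Φ s)) := by
    intro u Φ hagree t ht
    apply intervalIntegral.integral_congr
    intro s hs
    rw [uIcc_of_le ht.1] at hs
    have hsT : s ∈ Icc 0 T := ⟨hs.1, hs.2.trans ht.2⟩
    have hprt : pr t = t := hpr_eq t ht
    have hprs : pr s = s := hpr_eq s hsT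
    have hσts : σ (t, s) = s := by
      simp only [hσ_def]
      rw [hprs, hprt]
      exact min_eq_left hs.2
    have hDts : D (t, s) = ψ t - ψ s := by
      simp only [hD_def]
      rw [hprt, hσts]
    simp only [hG_def, hPm_def]
    rw [hDts, hprs, hσts, hprt, hagree s hsT]
  refine ⟨fun a => w (Set.projIcc 0 T hT.le a), ⟨?_, ?_⟩, ?_⟩
  · exact (w.continuous.comp continuous_projIcc).continuousOn
  · intro t ht
    have hco : ((Set.projIcc 0 T hT.le t : Icc (0:ℝ) T) : ℝ) = t := by
      rw [Set.projIcc_of_mem hT.le ht]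
    conv_lhs => rw [← hwfix]
    show (fun t : Icc (0:ℝ) T => Cq t Θ₀ + Rq t Θ₁ +
      ∫ s in (0:ℝ)..(t:ℝ), G w ((t:ℝ), s)) (Set.projIcc 0 T hT.le t) = _
    simp only [hco]
    rw [hmatch w (fun a => w (Set.projIcc 0 T hT.le a)) (fun s _ => rfl) t ht]
  · rintro Φ ⟨hΦc, hΦeq⟩ t ht
    set v : C(Icc (0:ℝ) T, X) := ⟨fun a => Φ a, hΦc.restrict⟩ with hv_def
    have hagree : ∀ s ∈ Icc (0:ℝ) T, v (Set.projIcc 0 T hT.le s) = Φ s := by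
      intro s hs
      simp only [hv_def, ContinuousMap.coe_mk]
      rw [Set.projIcc_of_mem hT.le hs]
      rfl
    have hvfix : Function.IsFixedPt Ψ v := by
      ext a
      show Cq (a:ℝ) Θ₀ + Rq (a:ℝ) Θ₁ + (∫ s in (0:ℝ)..(a:ℝ), G v ((a:ℝ), s)) = v a
      rw [hmatch v Φ hagree a a.2]
      exact (hΦeq a a.2).symm
    have hvw : v = w := hCW.fixedPoint_unique hvfix
    calc Φ t = v ⟨t, ht⟩ := rfl
      _ = w ⟨t, ht⟩ := by rw [hvw]
      _ = w (Set.projIcc 0 T hT.le t) := by rw [Set.projIcc_of_mem hT.le ht]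
end
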